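/- Let N ≥ 2, R > 0, g : ℝ → ℝ locally Lipschitz continuous, and let u be a large solution of −Δu + g(u) = 0 in B_R(0) satisfying (i) ∂u/∂r(x) → +∞ as |x| → R and (ii) |∇_τ u(x)| = o(∂u/∂r(x)) as |x| → R. Then for every boundary point P ∈ ∂B_R(0) with first coordinate P₁ > 0, there exists δ ∈ (0, R) such that ∂u/∂x₁(x) > 0 for all x ∈ B_R(0) ∩ B_δ(P). -/

import Mathlib

open Metric Set MeasureTheory

/-- The Laplacian of `u : ℝ^N → ℝ`, as the sum of second partial derivatives. -/
noncomputable def lapl {N : ℕ} (u : EuclideanSpace ℝ (Fin N) → ℝ)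
    (x : EuclideanSpace ℝ (Fin N)) : ℝ :=
  ∑ i : Fin N, fderiv ℝ (fderiv ℝ u) x (EuclideanSpace.single i 1) (EuclideanSpace.single i 1)

/-- The radial derivative `∂u/∂r(x) = ⟨Du(x), x/|x|⟩`. -/
noncomputable def radialDeriv {N : ℕ} (u : EuclideanSpace ℝ (Fin N) → ℝ)
    (x : EuclideanSpace ℝ (Fin N)) : ℝ :=
  (inner ℝ (gradient u x) ((‖x‖)⁻¹ • x) : ℝ)

/-- The tangential gradient `∇_τ u(x) = Du(x) − |x|⁻²⟨Du(x), x⟩ x`. -/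
noncomputable def tangentialGrad {N : ℕ} (u : EuclideanSpace ℝ (Fin N) → ℝ)
    (x : EuclideanSpace ℝ (Fin N)) : EuclideanSpace ℝ (Fin N) :=
  gradient u x - ((‖x‖ ^ 2)⁻¹ * (inner ℝ (gradient u x) x : ℝ)) • x

/-- `u` is a large solution of `−Δu + g(u) = 0` in the ball `B_R(0)`:
`u ∈ C²(B_R(0))`, `Δu = g(u)` in `B_R(0)`, and `u(x) → +∞` as `|x| → R`. -/
def IsLargeSolution {N : ℕ} (g : ℝ → ℝ) (R : ℝ)
    (u : EuclideanSpace ℝ (Fin N) → ℝ) : Prop :=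
  ContDiffOn ℝ 2 u (ball (0 : EuclideanSpace ℝ (Fin N)) R) ∧
  (∀ x ∈ ball (0 : EuclideanSpace ℝ (Fin N)) R, lapl u x = g (u x)) ∧
  (∀ M : ℝ, ∃ ρ ∈ Ico (0 : ℝ) R, ∀ x ∈ ball (0 : EuclideanSpace ℝ (Fin N)) R,
    ρ < ‖x‖ → M < u x)

/-- The Keller–Osserman condition: `g` is nondecreasing on `[a,∞)` and
`∫_a^∞ ds/√(G(s)) < ∞` where `G(s) = ∫_a^s g(σ) dσ`. -/
def KellerOsserman (g : ℝ → ℝ) (a : ℝ) : Prop :=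
  MonotoneOn g (Ici a) ∧
  IntegrableOn (fun s => 1 / Real.sqrt (∫ t in a..s, g t)) (Ici a)

theorem stmt_4 {N : ℕ} (hN : 2 ≤ N) (R : ℝ) (hR : 0 < R) (g : ℝ → ℝ)
    (hg : LocallyLipschitz g) (u : EuclideanSpace ℝ (Fin N) → ℝ)
    (hu : IsLargeSolution g R u)
    (hrad : ∀ M : ℝ, ∃ ρ ∈ Ico (0 : ℝ) R, ∀ x ∈ ball (0 : EuclideanSpace ℝ (Fin N)) R,
      ρ < ‖x‖ → M < radialDeriv u x)
    (htan : ∀ ε > (0 : ℝ), ∃ ρ ∈ Ico (0 : ℝ) R, ∀ x ∈ ball (0 : EuclideanSpace ℝ (Fin N)) R,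
      ρ < ‖x‖ → ‖tangentialGrad u x‖ ≤ ε * radialDeriv u x) :
    ∀ P : EuclideanSpace ℝ (Fin N), ‖P‖ = R → 0 < P ⟨0, by omega⟩ →
      ∃ δ ∈ Ioo (0 : ℝ) R, ∀ x ∈ ball (0 : EuclideanSpace ℝ (Fin N)) R ∩ ball P δ,
        0 < fderiv ℝ u x (EuclideanSpace.single (⟨0, by omega⟩ : Fin N) 1) := by
  intro P hP hP1
  set i : Fin N := ⟨0, by omega⟩ with hi
  set ε : ℝ := P i / (4 * R) with hε_def
  have hε : 0 < ε := by positivity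
  obtain ⟨ρ₁, hρ₁, h₁⟩ := htan ε hε
  obtain ⟨ρ₂, hρ₂, h₂⟩ := hrad 0
  set ρ : ℝ := max ρ₁ ρ₂ with hρ_def
  have hρR : ρ < R := max_lt hρ₁.2 hρ₂.2
  have hρ0 : 0 ≤ ρ := le_trans hρ₁.1 (le_max_left _ _)
  refine ⟨min (P i / 2) (min (R - ρ) (R / 2)), ⟨?_, ?_⟩, ?_⟩
  · exact lt_min (by positivity) (lt_min (by linarith) (by linarith))
  · calc min (P i / 2) (min (R - ρ) (R / 2)) ≤ R / 2 :=
        le_trans (min_le_right _ _) (min_le_right _ _)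
      _ < R := by linarith
  · rintro x ⟨hxR, hxP⟩
    set δ := min (P i / 2) (min (R - ρ) (R / 2)) with hδ_def
    have hδ1 : δ ≤ P i / 2 := min_le_left _ _
    have hδ2 : δ ≤ R - ρ := le_trans (min_le_right _ _) (min_le_left _ _)
    have hδ3 : δ ≤ R / 2 := le_trans (min_le_right _ _) (min_le_right _ _)
    have hxRlt : ‖x‖ < R := by simpa [dist_eq_norm] using hxR
    have hdxP : ‖x - P‖ < δ := by simpa [dist_eq_norm] using hxP
    have hnx : ρ < ‖x‖ := by
      have h1 : ‖P‖ - ‖x‖ ≤ ‖P - x‖ := norm_sub_norm_le P x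
      rw [norm_sub_rev, hP] at h1
      linarith
    have hr0 : (0 : ℝ) < ‖x‖ := lt_of_le_of_lt hρ0 hnx
    have hcoord : P i / 2 < x i := by
      have habs : |(x - P) i| ≤ ‖x - P‖ := by
        have h := abs_real_inner_le_norm (x - P) (EuclideanSpace.single i (1 : ℝ))
        simpa [EuclideanSpace.inner_single_right, EuclideanSpace.norm_single] using h
      have hxy : (x - P) i = x i - P i := rfl
      rw [hxy] at habs
      have := abs_lt.mp (habs.trans_lt hdxP)
      linarith [this.1]
    have hrd : 0 < radialDeriv u x := h₂ x hxR (lt_of_le_of_lt (le_max_right ρ₁ ρ₂) hnx)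
    have htb : ‖tangentialGrad u x‖ ≤ ε * radialDeriv u x :=
      h₁ x hxR (lt_of_le_of_lt (le_max_left ρ₁ ρ₂) hnx)
    have hfd : fderiv ℝ u x (EuclideanSpace.single i 1)
        = (inner ℝ (gradient u x) (EuclideanSpace.single i (1:ℝ)) : ℝ) := by
      rw [gradient, InnerProductSpace.toDual_symm_apply]
    rw [hfd]
    set G := gradient u x with hG
    set r := ‖x‖ with hr
    set a : ℝ := inner ℝ G x with ha
    have hrd_eq : radialDeriv u x = r⁻¹ * a := by
      rw [radialDeriv, real_inner_smul_right]
    have hdecomp : (inner ℝ G (EuclideanSpace.single i (1:ℝ)) : ℝ)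
        = (inner ℝ (tangentialGrad u x) (EuclideanSpace.single i (1:ℝ)) : ℝ)
          + ((r ^ 2)⁻¹ * a) * x i := by
      rw [tangentialGrad, inner_sub_left, real_inner_smul_left]
      simp only [EuclideanSpace.inner_single_right, RCLike.inner_apply, map_one, one_mul,
        starRingEnd_apply, star_trivial]
      rw [← hG, ← ha, ← hr]
      ring
    rw [hdecomp]
    have hT : -(ε * radialDeriv u x)
        ≤ (inner ℝ (tangentialGrad u x) (EuclideanSpace.single i (1:ℝ)) : ℝ) := by
      have h := abs_real_inner_le_norm (tangentialGrad u x) (EuclideanSpace.single i (1:ℝ))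
      rw [EuclideanSpace.norm_single, norm_one, mul_one] at h
      have := (abs_le.mp h).1
      linarith [htb]
    have hkey : ((r ^ 2)⁻¹ * a) * x i = radialDeriv u x * x i / r := by
      rw [hrd_eq, sq, mul_inv, div_eq_mul_inv]; ring
    rw [hkey]
    have hrR : r < R := hxRlt
    have hc : 2 * ε * r < x i := by
      have h2 : 2 * ε * R = P i / 2 := by rw [hε_def]; field_simp; ring
      nlinarith [mul_pos hε (sub_pos.mpr hrR)]
    have hdiv : radialDeriv u x * (2 * ε) < radialDeriv u x * x i / r := by
      rw [lt_div_iff₀ hr0]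
      nlinarith [mul_lt_mul_of_pos_left hc hrd]
    have h2e : radialDeriv u x * (2 * ε) = 2 * (ε * radialDeriv u x) := by ring
    linarith [mul_pos hε hrd]
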